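/- Let f : ℝ → ℝ be C¹ and concave, and let y₁ ≤ ⋯ ≤ yₙ. Suppose x₁,…,xₙ satisfy x₁ + ⋯ + xₖ ≤ y₁ + ⋯ + yₖ for k = 1,…,n−1, and x₁ + ⋯ + xₙ = y₁ + ⋯ + yₙ. Then f(x₁) + ⋯ + f(xₙ) ≤ f(y₁) + ⋯ + f(yₙ). -/

import Mathlib

/-- Tangent line inequality for concave differentiable functions. -/
lemma concave_tangent (f : ℝ → ℝ) (hf : Differentiable ℝ f)
    (hconc : ConcaveOn ℝ Set.univ f) (a b : ℝ) :
    f a ≤ f b + deriv f b * (a - b) := by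
  have hcv : ConvexOn ℝ Set.univ (-f) := hconc.neg
  have hd : deriv (-f) b = -deriv f b := by
    rw [Pi.neg_def]; exact deriv.neg
  rcases lt_trichotomy a b with h | h | h
  · have h1 := hcv.slope_le_deriv (Set.mem_univ a) (Set.mem_univ b) h
      (hf.neg.differentiableAt)
    rw [slope_def_field] at h1
    rw [hd] at h1
    have hba : 0 < b - a := by linarith
    rw [div_le_iff₀ hba] at h1
    simp only [Pi.neg_apply] at h1
    nlinarith
  · simp [h]
  · have h1 := hcv.deriv_le_slope (Set.mem_univ b) (Set.mem_univ a) h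
      (hf.neg.differentiableAt)
    rw [slope_def_field] at h1
    rw [hd] at h1
    have hab : 0 < a - b := by linarith
    rw [le_div_iff₀ hab] at h1
    simp only [Pi.neg_apply] at h1
    nlinarith

lemma concave_deriv_antitone (f : ℝ → ℝ) (hf : Differentiable ℝ f)
    (hconc : ConcaveOn ℝ Set.univ f) {a b : ℝ} (hab : a ≤ b) :
    deriv f b ≤ deriv f a := by
  have hcv : ConvexOn ℝ Set.univ (-f) := hconc.neg
  have := hcv.monotoneOn_deriv (fun z _ => hf.neg.differentiableAt)
    (Set.mem_univ a) (Set.mem_univ b) hab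
  have hda : deriv (-f) a = -deriv f a := by rw [Pi.neg_def]; exact deriv.neg
  have hdb : deriv (-f) b = -deriv f b := by rw [Pi.neg_def]; exact deriv.neg
  rw [hda, hdb] at this
  linarith

/-- for `f : ℝ → ℝ` `C¹` and concave, `y` nondecreasing, and `x`
with partial sums dominated by those of `y` and equal total sum,
`Σ f (x i) ≤ Σ f (y i)`. -/
theorem concave_majorization (f : ℝ → ℝ)
    (hf : ContDiff ℝ 1 f)
    (hconc : ConcaveOn ℝ Set.univ f)
    (n : ℕ) (x y : ℕ → ℝ)
    (hymono : ∀ i, i + 1 < n → y i ≤ y (i + 1))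
    (hsum : ∀ k, k < n → ∑ i ∈ Finset.range k, x i ≤ ∑ i ∈ Finset.range k, y i)
    (htot : ∑ i ∈ Finset.range n, x i = ∑ i ∈ Finset.range n, y i) :
    ∑ i ∈ Finset.range n, f (x i) ≤ ∑ i ∈ Finset.range n, f (y i) := by
  have hdiff : Differentiable ℝ f := hf.differentiable one_ne_zero
  set d : ℕ → ℝ := fun i => deriv f (y i) with hd
  set g : ℕ → ℝ := fun i => x i - y i with hg
  have step1 : ∑ i ∈ Finset.range n, f (x i) ≤
      ∑ i ∈ Finset.range n, (f (y i) + d i * g i) := by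
    apply Finset.sum_le_sum
    intro i _
    exact concave_tangent f hdiff hconc (x i) (y i)
  have abel : ∑ i ∈ Finset.range n, d i • g i =
      d (n - 1) • (∑ i ∈ Finset.range n, g i) -
        ∑ i ∈ Finset.range (n - 1), (d (i + 1) - d i) • ∑ j ∈ Finset.range (i + 1), g j :=
    Finset.sum_range_by_parts d g n
  have hGn : ∑ i ∈ Finset.range n, g i = 0 := by
    simp only [hg, Finset.sum_sub_distrib]
    linarith [htot]
  have hterm : ∀ i ∈ Finset.range (n - 1),
      0 ≤ (d (i + 1) - d i) * ∑ j ∈ Finset.range (i + 1), g j := by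
    intro i hi
    rw [Finset.mem_range] at hi
    have hin : i + 1 < n := by omega
    have hG : ∑ j ∈ Finset.range (i + 1), g j ≤ 0 := by
      simp only [hg, Finset.sum_sub_distrib]
      linarith [hsum (i + 1) hin]
    have hdle : d (i + 1) ≤ d i :=
      concave_deriv_antitone f hdiff hconc (hymono i hin)
    nlinarith
  have step2 : ∑ i ∈ Finset.range n, d i * g i ≤ 0 := by
    have := abel
    simp only [smul_eq_mul] at this
    rw [this, hGn, mul_zero, zero_sub, neg_nonpos]
    exact Finset.sum_nonneg hterm
  calc ∑ i ∈ Finset.range n, f (x i)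
      ≤ ∑ i ∈ Finset.range n, (f (y i) + d i * g i) := step1
    _ = ∑ i ∈ Finset.range n, f (y i) + ∑ i ∈ Finset.range n, d i * g i := by
        rw [Finset.sum_add_distrib]
    _ ≤ ∑ i ∈ Finset.range n, f (y i) := by linarith [step2]
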